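/- If A and B are real symmetric n×n matrices that are not simultaneously diagonalizable via congruence, then the set I = {μ ∈ ℝ : A + μB is positive semidefinite} contains at most one element. -/

import Mathlib

open Matrix

namespace SDCAux

variable {n : ℕ}

lemma real_conjT (M : Matrix (Fin n) (Fin n) ℝ) : Mᴴ = Mᵀ := by
  ext i j; simp [conjTranspose_apply]

lemma eq_zero_of_forall_nonneg {a b : ℝ} (h : ∀ t : ℝ, 0 ≤ a + t * b) : b = 0 := by
  by_contra hb
  have h0 := h 0
  have h1 := h (-(a + 1) / b)
  rw [div_mul_cancel₀ _ hb] at h1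
  linarith

lemma psd_diag_nonneg {C : Matrix (Fin n) (Fin n) ℝ} (hC : C.PosSemidef) (i : Fin n) :
    0 ≤ C i i := by
  have := hC.dotProduct_mulVec_nonneg (Pi.single i 1)
  simpa [mulVec_single, dotProduct_single, single_dotProduct] using this

lemma psd_row_zero {C : Matrix (Fin n) (Fin n) ℝ} (hC : C.PosSemidef) {i : Fin n}
    (h : C i i = 0) (j : Fin n) : C i j = 0 := by
  have hsym : C j i = C i j := by
    have := hC.1.apply j i
    simpa using this.symm
  have hb : 2 * C i j = 0 := by
    apply eq_zero_of_forall_nonneg (a := C j j) (b := 2 * C i j)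
    intro t
    have hq := hC.dotProduct_mulVec_nonneg ((Pi.single j 1 : Fin n → ℝ) + t • (Pi.single i 1 : Fin n → ℝ))
    simp only [star_trivial, mulVec_add, mulVec_smul, mulVec_single, mul_one,
      dotProduct_add, add_dotProduct, smul_dotProduct, dotProduct_smul, smul_eq_mul] at hq
    have e1 : ((Pi.single j 1 : Fin n → ℝ) ⬝ᵥ fun k => C k j) = C j j := by
      simp [single_dotProduct]
    have e2 : ((Pi.single j 1 : Fin n → ℝ) ⬝ᵥ fun k => C k i) = C j i := by
      simp [single_dotProduct]
    have e3 : ((Pi.single i 1 : Fin n → ℝ) ⬝ᵥ fun k => C k j) = C i j := by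
      simp [single_dotProduct]
    have e4 : ((Pi.single i 1 : Fin n → ℝ) ⬝ᵥ fun k => C k i) = C i i := by
      simp [single_dotProduct]
    have ecol : ∀ k, C.col k = fun l => C l k := fun k => rfl
    simp only [ecol, op_smul_eq_mul, mul_one] at hq
    rw [e1, e2, e3, e4, h, hsym] at hq
    nlinarith [hq]
  linarith

set_option maxHeartbeats 2000000 in
/-- Two real PSD matrices are simultaneously diagonalizable by congruence. -/
lemma psd_pair_sdc (M N : Matrix (Fin n) (Fin n) ℝ) (hM : M.PosSemidef) (hN : N.PosSemidef) :
    ∃ P : Matrix (Fin n) (Fin n) ℝ, IsUnit P.det ∧ (Pᵀ * M * P).IsDiag ∧ (Pᵀ * N * P).IsDiag := by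
  have hS : (M + N).PosSemidef := hM.add hN
  have hSh : (M + N).IsHermitian := hS.isHermitian
  set U : Matrix (Fin n) (Fin n) ℝ := (hSh.eigenvectorUnitary : Matrix (Fin n) (Fin n) ℝ) with hU
  set μ : Fin n → ℝ := hSh.eigenvalues with hμ
  have hμ0 : ∀ i, 0 ≤ μ i := fun i => hS.eigenvalues_nonneg i
  have hspec : M + N = U * diagonal μ * Uᴴ := by
    have := hSh.spectral_theorem
    simpa [hU, hμ, Matrix.star_eq_conjTranspose] using this
  have hUU : Uᴴ * U = 1 := by
    have := (Matrix.mem_unitaryGroup_iff').mp hSh.eigenvectorUnitary.2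
    simpa [hU, Matrix.star_eq_conjTranspose] using this
  have hUUt : U * Uᴴ = 1 := by
    have := (Matrix.mem_unitaryGroup_iff).mp hSh.eigenvectorUnitary.2
    simpa [hU, Matrix.star_eq_conjTranspose] using this
  set f : Fin n → ℝ := fun i => if μ i = 0 then 1 else (Real.sqrt (μ i))⁻¹ with hf
  set e : Fin n → ℝ := fun i => if μ i = 0 then 0 else 1 with he
  have hf0 : ∀ i, f i ≠ 0 := by
    intro i
    by_cases h : μ i = 0
    · simp [hf, h]
    · have hpos : 0 < μ i := lt_of_le_of_ne (hμ0 i) (Ne.symm h)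
      have : Real.sqrt (μ i) ≠ 0 := Real.sqrt_ne_zero'.mpr hpos
      simp [hf, h, this]
  set P₁ : Matrix (Fin n) (Fin n) ℝ := U * diagonal f with hP₁
  have hP₁T : P₁ᵀ = diagonal f * Uᴴ := by
    rw [hP₁, transpose_mul, diagonal_transpose, real_conjT]
  have hfμf : ∀ i, f i * μ i * f i = e i := by
    intro i
    by_cases h : μ i = 0
    · simp [hf, he, h]
    · have hpos : 0 < μ i := lt_of_le_of_ne (hμ0 i) (Ne.symm h)
      have hs : Real.sqrt (μ i) * Real.sqrt (μ i) = μ i := Real.mul_self_sqrt (hμ0 i)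
      have hsne : Real.sqrt (μ i) ≠ 0 := Real.sqrt_ne_zero'.mpr hpos
      simp only [hf, he, h, if_false]
      field_simp
      rw [sq, hs]
  have hSdiag : P₁ᵀ * (M + N) * P₁ = diagonal e := by
    rw [hP₁T, hP₁, hspec]
    calc diagonal f * Uᴴ * (U * diagonal μ * Uᴴ) * (U * diagonal f)
        = diagonal f * (Uᴴ * U) * diagonal μ * (Uᴴ * U) * diagonal f := by
          noncomm_ring
      _ = diagonal f * diagonal μ * diagonal f := by rw [hUU]; noncomm_ring
      _ = diagonal e := by
          rw [diagonal_mul_diagonal, diagonal_mul_diagonal]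
          exact congrArg _ (funext hfμf)
  set M' : Matrix (Fin n) (Fin n) ℝ := P₁ᵀ * M * P₁ with hM'def
  set N' : Matrix (Fin n) (Fin n) ℝ := P₁ᵀ * N * P₁ with hN'def
  have hM' : M'.PosSemidef := by
    have := hM.conjTranspose_mul_mul_same P₁
    rwa [real_conjT] at this
  have hN' : N'.PosSemidef := by
    have := hN.conjTranspose_mul_mul_same P₁
    rwa [real_conjT] at this
  have hsum : M' + N' = diagonal e := by
    rw [hM'def, hN'def, ← hSdiag]
    noncomm_ring
  have hMdiag0 : ∀ i, e i = 0 → M' i i = 0 := by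
    intro i hei
    have h1 : M' i i + N' i i = 0 := by
      have := congrFun (congrFun hsum i) i
      simpa [diagonal_apply_eq, hei] using this
    have h2 := psd_diag_nonneg hM' i
    have h3 := psd_diag_nonneg hN' i
    linarith
  have hMrow : ∀ i j, e i = 0 → M' i j = 0 := fun i j hei =>
    psd_row_zero hM' (hMdiag0 i hei) j
  have hMcol : ∀ i j, e j = 0 → M' i j = 0 := by
    intro i j hej
    have := hMrow j i hej
    have hsym := hM'.1.apply j i
    simp only [star_trivial] at hsym
    rw [hsym]
    exact this
  have hEM : diagonal e * M' = M' := by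
    ext i j
    rw [diagonal_mul]
    by_cases h : e i = 0
    · rw [h, hMrow i j h, zero_mul]
    · have h1 : e i = 1 := by
        by_cases h' : μ i = 0
        · exact absurd (by simp [he, h']) h
        · simp [he, h']
      rw [h1, one_mul]
  have hME : M' * diagonal e = M' := by
    ext i j
    rw [mul_diagonal]
    by_cases h : e j = 0
    · rw [h, hMcol i j h, mul_zero]
    · have h1 : e j = 1 := by
        by_cases h' : μ j = 0
        · exact absurd (by simp [he, h']) h
        · simp [he, h']
      rw [h1, mul_one]
  -- the auxiliary matrix C
  set C : Matrix (Fin n) (Fin n) ℝ := M' + (2 : ℝ) • (1 - diagonal e) with hCdef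
  have hCh : C.IsHermitian := by
    have h1 : M'ᴴ = M' := hM'.1
    have h2 : (diagonal e)ᴴ = diagonal e := by
      ext i j
      by_cases h : i = j <;> simp [conjTranspose_apply, diagonal_apply, h, eq_comm]
    rw [Matrix.IsHermitian, hCdef, conjTranspose_add, h1, conjTranspose_smul,
      conjTranspose_sub, conjTranspose_one, h2, star_trivial]
  set V : Matrix (Fin n) (Fin n) ℝ := (hCh.eigenvectorUnitary : Matrix (Fin n) (Fin n) ℝ) with hV
  set lam : Fin n → ℝ := hCh.eigenvalues with hlam
  have hVV : Vᴴ * V = 1 := by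
    have := (Matrix.mem_unitaryGroup_iff').mp hCh.eigenvectorUnitary.2
    simpa [hV, Matrix.star_eq_conjTranspose] using this
  have hCspec : C = V * diagonal lam * Vᴴ := by
    have := hCh.spectral_theorem
    simpa [hV, hlam, Matrix.star_eq_conjTranspose] using this
  have hVVt : V * Vᴴ = 1 := by
    have := (Matrix.mem_unitaryGroup_iff).mp hCh.eigenvectorUnitary.2
    simpa [hV, Matrix.star_eq_conjTranspose] using this
  have hCV : C * V = V * diagonal lam := by
    rw [hCspec, mul_assoc, mul_assoc, hVV, mul_one]
  -- columns of V are eigenvectors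
  set w : Fin n → Fin n → ℝ := fun j k => V k j with hw
  have hCw : ∀ j, C *ᵥ w j = lam j • w j := by
    intro j
    funext i
    have h := congrFun (congrFun hCV i) j
    rw [Matrix.mul_diagonal] at h
    rw [Matrix.mul_apply] at h
    simpa [mulVec, dotProduct, hw, mul_comm] using h
  have hEw : ∀ x : Fin n → ℝ, diagonal e *ᵥ (M' *ᵥ x) = M' *ᵥ x := by
    intro x; rw [mulVec_mulVec, hEM]
  -- derive eigen-relations for M' and diagonal e
  have hEE : diagonal e * diagonal e = diagonal e := by
    have h2 : (fun i => e i * e i) = e := by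
      funext i
      by_cases h : μ i = 0 <;> simp [he, h]
    rw [diagonal_mul_diagonal, h2]
  set m : Fin n → ℝ := fun j => if lam j = 2 then 0 else lam j with hm
  set eps : Fin n → ℝ := fun j => if lam j = 2 then 0 else 1 with heps
  have key : ∀ j, M' *ᵥ w j = m j • w j ∧ diagonal e *ᵥ w j = eps j • w j := by
    intro j
    have hCwj := hCw j
    have hexpand : C *ᵥ w j = M' *ᵥ w j + (2 : ℝ) • w j - (2 : ℝ) • (diagonal e *ᵥ w j) := by
      rw [hCdef, add_mulVec, smul_mulVec, sub_mulVec, one_mulVec, smul_sub,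
        ← add_sub_assoc]
    have hMEw : M' *ᵥ (diagonal e *ᵥ w j) = M' *ᵥ w j := by
      rw [mulVec_mulVec, hME]
    -- apply diagonal e to the eigen equation
    have hstep : M' *ᵥ w j = lam j • (diagonal e *ᵥ w j) := by
      have h1 : diagonal e *ᵥ (C *ᵥ w j) = lam j • (diagonal e *ᵥ w j) := by
        rw [hCwj, mulVec_smul]
      have h2 : diagonal e *ᵥ (C *ᵥ w j) = M' *ᵥ w j := by
        have hee : diagonal e *ᵥ (diagonal e *ᵥ w j) = diagonal e *ᵥ w j := by
          rw [mulVec_mulVec, hEE]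
        rw [hexpand, mulVec_sub, mulVec_add, mulVec_smul, mulVec_smul, hEw, hee]
        abel
      rw [← h1, h2]
    by_cases hl : lam j = 2
    · -- eigenvalue 2 : w j is in the kernel block
      have hquad : (w j) ⬝ᵥ (M' *ᵥ w j) = 2 * ((w j) ⬝ᵥ (diagonal e *ᵥ w j)) := by
        rw [hstep, hl, dotProduct_smul, smul_eq_mul]
      have hNpsd := hN'.dotProduct_mulVec_nonneg (w j)
      have hNsum : N' = diagonal e - M' := by
        rw [← hsum]; abel
      have hNw : (w j) ⬝ᵥ (N' *ᵥ w j) = (w j) ⬝ᵥ (diagonal e *ᵥ w j) - (w j) ⬝ᵥ (M' *ᵥ w j) := by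
        rw [hNsum, sub_mulVec, dotProduct_sub]
      have hEq : (w j) ⬝ᵥ (diagonal e *ᵥ w j) = ∑ i, e i * (w j i)^2 := by
        simp only [dotProduct, mulVec_diagonal]
        congr 1
        funext i
        ring
      have hEnn : 0 ≤ (w j) ⬝ᵥ (diagonal e *ᵥ w j) := by
        rw [hEq]
        apply Finset.sum_nonneg
        intro i _
        by_cases h : μ i = 0 <;> simp [he, h] <;> positivity
      have hle : (w j) ⬝ᵥ (diagonal e *ᵥ w j) ≤ 0 := by
        simp only [star_trivial] at hNpsd
        rw [hNw, hquad] at hNpsd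
        linarith
      have hEzero : (w j) ⬝ᵥ (diagonal e *ᵥ w j) = 0 := le_antisymm hle hEnn
      have hterm : ∀ i, e i * (w j i)^2 = 0 := by
        have hsumz : ∑ i, e i * (w j i)^2 = 0 := by rw [← hEq, hEzero]
        intro i
        have hnn : ∀ i ∈ Finset.univ, (0:ℝ) ≤ e i * (w j i)^2 := by
          intro i _
          by_cases h : μ i = 0 <;> simp [he, h] <;> positivity
        exact (Finset.sum_eq_zero_iff_of_nonneg hnn).mp hsumz i (Finset.mem_univ i)
      have hEwz : diagonal e *ᵥ w j = 0 := by
        funext i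
        rw [mulVec_diagonal]
        have := hterm i
        by_cases h : μ i = 0
        · simp [he, h]
        · simp only [he, h, if_false, one_mul] at this ⊢
          have : w j i = 0 := by nlinarith [this]
          simp [this]
      constructor
      · rw [hstep, hEwz, smul_zero, hm]
        simp [hl]
      · rw [hEwz, heps]
        simp [hl]
    · -- eigenvalue ≠ 2 : w j is in the unit block
      have hEwj : diagonal e *ᵥ w j = w j := by
        have h3 : (lam j - 2) • (diagonal e *ᵥ w j) = (lam j - 2) • w j := by
          have := hCwj
          rw [hexpand, hstep] at this
          have expand2 : lam j • (diagonal e *ᵥ w j) + (2:ℝ) • w j - (2:ℝ) • (diagonal e *ᵥ w j)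
              = lam j • w j := this
          funext i
          have := congrFun expand2 i
          simp only [Pi.add_apply, Pi.sub_apply, Pi.smul_apply, smul_eq_mul] at this ⊢
          ring_nf
          ring_nf at this
          linarith
        have hne2 : lam j - 2 ≠ 0 := sub_ne_zero.mpr hl
        have := smul_right_injective (Fin n → ℝ) hne2 h3
        exact this
      constructor
      · rw [hstep, hEwj, hm]
        simp [hl]
      · rw [hEwj, heps]
        simp [hl]
  -- package into matrix identities
  have hMV : M' * V = V * diagonal m := by
    ext i j
    rw [Matrix.mul_diagonal, Matrix.mul_apply]
    have h := congrFun ((key j).1) i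
    simpa [mulVec, dotProduct, hw, mul_comm] using h
  have hEV : diagonal e * V = V * diagonal eps := by
    ext i j
    rw [Matrix.mul_diagonal, Matrix.mul_apply]
    have h := congrFun ((key j).2) i
    simpa [mulVec, dotProduct, hw, mul_comm] using h
  have hVMV : Vᴴ * M' * V = diagonal m := by
    rw [mul_assoc, hMV, ← mul_assoc, hVV, one_mul]
  have hVNV : Vᴴ * N' * V = diagonal (fun j => eps j - m j) := by
    have hNsum : N' = diagonal e - M' := by rw [← hsum]; abel
    rw [hNsum, mul_sub, sub_mul, mul_assoc, hEV, ← mul_assoc, hVV, one_mul, hVMV]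
    rw [diagonal_sub]
  refine ⟨P₁ * V, ?_, ?_, ?_⟩
  · rw [det_mul]
    apply IsUnit.mul
    · rw [hP₁, det_mul, det_diagonal]
      apply IsUnit.mul
      · have : U.det * U.det = 1 := by
          have := congrArg det hUU
          rwa [det_mul, det_one, real_conjT, det_transpose] at this
        exact IsUnit.of_mul_eq_one _ this
      · rw [isUnit_iff_ne_zero]
        exact Finset.prod_ne_zero_iff.mpr (fun i _ => hf0 i)
    · have : V.det * V.det = 1 := by
        have := congrArg det hVV
        rwa [det_mul, det_one, real_conjT, det_transpose] at this
      exact IsUnit.of_mul_eq_one _ this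
  · have : (P₁ * V)ᵀ * M * (P₁ * V) = Vᴴ * M' * V := by
      rw [transpose_mul, ← real_conjT, hM'def]
      noncomm_ring
    rw [this, hVMV]
    exact isDiag_diagonal m
  · have : (P₁ * V)ᵀ * N * (P₁ * V) = Vᴴ * N' * V := by
      rw [transpose_mul, ← real_conjT, hN'def]
      noncomm_ring
    rw [this, hVNV]
    exact isDiag_diagonal _

end SDCAux

open SDCAux in
/-- If real symmetric A, B are not SDC, then {μ : A + μB ⪰ 0} has at most one element. -/
theorem not_sdc_psd_set_subsingleton {n : ℕ} (A B : Matrix (Fin n) (Fin n) ℝ)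
    (hA : A.IsSymm) (hB : B.IsSymm)
    (hnsdc : ¬ ∃ P : Matrix (Fin n) (Fin n) ℝ, IsUnit P.det ∧
      (Pᵀ * A * P).IsDiag ∧ (Pᵀ * B * P).IsDiag) :
    Set.Subsingleton {μ : ℝ | (A + μ • B).PosSemidef} := by
  intro μ₁ hμ₁ μ₂ hμ₂
  by_contra hne
  exfalso
  apply hnsdc
  obtain ⟨P, hdet, hD1, hD2⟩ := psd_pair_sdc _ _ hμ₁ hμ₂
  have hne' : μ₂ - μ₁ ≠ 0 := sub_ne_zero.mpr (Ne.symm hne)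
  refine ⟨P, hdet, ?_, ?_⟩
  · have hAeq : A = (μ₂ - μ₁)⁻¹ • (μ₂ • (A + μ₁ • B) - μ₁ • (A + μ₂ • B)) := by
      have h1 : μ₂ • (A + μ₁ • B) - μ₁ • (A + μ₂ • B) = (μ₂ - μ₁) • A := by
        module
      rw [h1, smul_smul, inv_mul_cancel₀ hne', one_smul]
    rw [hAeq]
    have hexp : Pᵀ * ((μ₂ - μ₁)⁻¹ • (μ₂ • (A + μ₁ • B) - μ₁ • (A + μ₂ • B))) * P
        = (μ₂ - μ₁)⁻¹ • (μ₂ • (Pᵀ * (A + μ₁ • B) * P) - μ₁ • (Pᵀ * (A + μ₂ • B) * P)) := by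
      simp only [Matrix.mul_smul, Matrix.smul_mul, Matrix.mul_sub, Matrix.sub_mul]
    rw [hexp]
    exact ((hD1.smul μ₂).sub (hD2.smul μ₁)).smul _
  · have hBeq : B = (μ₂ - μ₁)⁻¹ • ((A + μ₂ • B) - (A + μ₁ • B)) := by
      have h1 : (A + μ₂ • B) - (A + μ₁ • B) = (μ₂ - μ₁) • B := by module
      rw [h1, smul_smul, inv_mul_cancel₀ hne', one_smul]
    rw [hBeq]
    have hexp : Pᵀ * ((μ₂ - μ₁)⁻¹ • ((A + μ₂ • B) - (A + μ₁ • B))) * P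
        = (μ₂ - μ₁)⁻¹ • ((Pᵀ * (A + μ₂ • B) * P) - (Pᵀ * (A + μ₁ • B) * P)) := by
      simp only [Matrix.mul_smul, Matrix.smul_mul, Matrix.mul_sub, Matrix.sub_mul]
    rw [hexp]
    exact (hD2.sub hD1).smul _
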